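/- arXiv:2104.13835 — 3 statements merged into one kernel-verified Lean document; each statement's English description precedes it below -/
import Mathlib

section
/- For any finite lattice L, the congruence lattice Con L is a finite distributive lattice. -/
universe u

/-- A congruence of a lattice: an equivalence relation compatible with `⊔` and `⊓`. -/
structure LatticeCong (L : Type u) [Lattice L] : Type u where
  r : L → L → Prop
  refl : ∀ a, r a a
  symm : ∀ {a b}, r a b → r b a
  trans : ∀ {a b c}, r a b → r b c → r a c
  sup' : ∀ {a b c d}, r a b → r c d → r (a ⊔ c) (b ⊔ d)
  inf' : ∀ {a b c d}, r a b → r c d → r (a ⊓ c) (b ⊓ d)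

namespace LatticeCong

variable {L : Type u} [Lattice L]

instance : PartialOrder (LatticeCong L) where
  le θ ψ := ∀ a b, θ.r a b → ψ.r a b
  le_refl _ _ _ h := h
  le_trans _ _ _ h1 h2 a b h := h2 a b (h1 a b h)
  le_antisymm θ ψ h1 h2 := by
    cases θ; cases ψ
    simp only [mk.injEq]
    funext a b
    exact propext ⟨h1 a b, h2 a b⟩

instance : InfSet (LatticeCong L) :=
  ⟨fun S =>
    { r := fun a b => ∀ θ ∈ S, θ.r a b
      refl := fun a θ _ => θ.refl a
      symm := fun h θ hθ => θ.symm (h θ hθ)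
      trans := fun h1 h2 θ hθ => θ.trans (h1 θ hθ) (h2 θ hθ)
      sup' := fun h1 h2 θ hθ => θ.sup' (h1 θ hθ) (h2 θ hθ)
      inf' := fun h1 h2 θ hθ => θ.inf' (h1 θ hθ) (h2 θ hθ) }⟩

instance : CompleteLattice (LatticeCong L) :=
  completeLatticeOfInf _ (fun S =>
    ⟨fun θ hθ a b h => h θ hθ, fun ψ hψ a b h θ hθ => hψ hθ a b h⟩)

/-- The principal congruence generated by a pair `(a, b)`. -/
def gen (a b : L) : LatticeCong L := sInf {θ : LatticeCong L | θ.r a b}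

/-- A congruence is principal if it is the smallest congruence collapsing some pair. -/
def IsPrincipal (θ : LatticeCong L) : Prop := ∃ a b : L, θ = gen a b

/-! ### Auxiliary lemmas -/

theorem le_def {θ ψ : LatticeCong L} : θ ≤ ψ ↔ ∀ a b, θ.r a b → ψ.r a b := Iff.rfl

theorem inf_r {x y : LatticeCong L} {a b : L} :
    (x ⊓ y).r a b ↔ x.r a b ∧ y.r a b := by
  constructor
  · intro h
    exact ⟨h x (Or.inl rfl), h y (Or.inr rfl)⟩
  · rintro ⟨hx, hy⟩ θ (rfl | rfl)
    · exact hx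
    · exact hy

/-- The chain congruence: reflexive-transitive closure of the union. -/
def chain (β γ : LatticeCong L) : LatticeCong L where
  r := Relation.ReflTransGen (fun a b => β.r a b ∨ γ.r a b)
  refl _ := Relation.ReflTransGen.refl
  symm h := by
    induction h with
    | refl => exact Relation.ReflTransGen.refl
    | tail _ hstep ih =>
      exact Relation.ReflTransGen.head
        (hstep.imp (fun h => β.symm h) (fun h => γ.symm h)) ih
  trans h1 h2 := h1.trans h2
  sup' := by
    intro a b c d h1 h2
    have key : ∀ (e : L) {p q : L},
        Relation.ReflTransGen (fun a b => β.r a b ∨ γ.r a b) p q →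
        Relation.ReflTransGen (fun a b => β.r a b ∨ γ.r a b) (p ⊔ e) (q ⊔ e) := by
      intro e p q h
      induction h with
      | refl => exact Relation.ReflTransGen.refl
      | tail _ hstep ih =>
        exact ih.tail (hstep.imp (fun h => β.sup' h (β.refl e))
          (fun h => γ.sup' h (γ.refl e)))
    have key2 : ∀ (e : L) {p q : L},
        Relation.ReflTransGen (fun a b => β.r a b ∨ γ.r a b) p q →
        Relation.ReflTransGen (fun a b => β.r a b ∨ γ.r a b) (e ⊔ p) (e ⊔ q) := by
      intro e p q h
      simpa [sup_comm] using key e h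
    exact (key c h1).trans (key2 b h2)
  inf' := by
    intro a b c d h1 h2
    have key : ∀ (e : L) {p q : L},
        Relation.ReflTransGen (fun a b => β.r a b ∨ γ.r a b) p q →
        Relation.ReflTransGen (fun a b => β.r a b ∨ γ.r a b) (p ⊓ e) (q ⊓ e) := by
      intro e p q h
      induction h with
      | refl => exact Relation.ReflTransGen.refl
      | tail _ hstep ih =>
        exact ih.tail (hstep.imp (fun h => β.inf' h (β.refl e))
          (fun h => γ.inf' h (γ.refl e)))
    have key2 : ∀ (e : L) {p q : L},
        Relation.ReflTransGen (fun a b => β.r a b ∨ γ.r a b) p q →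
        Relation.ReflTransGen (fun a b => β.r a b ∨ γ.r a b) (e ⊓ p) (e ⊓ q) := by
      intro e p q h
      simpa [inf_comm] using key e h
    exact (key c h1).trans (key2 b h2)

theorem sup_eq_chain (β γ : LatticeCong L) : β ⊔ γ = chain β γ := by
  apply le_antisymm
  · apply sup_le
    · intro a b h
      exact Relation.ReflTransGen.single (Or.inl h)
    · intro a b h
      exact Relation.ReflTransGen.single (Or.inr h)
  · intro a b h
    induction h with
    | refl => exact (β ⊔ γ).refl a
    | tail _ hstep ih =>
      refine (β ⊔ γ).trans ih ?_
      rcases hstep with h | h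
      · exact le_sup_left (a := β) (b := γ) _ _ h
      · exact le_sup_right (a := β) (b := γ) _ _ h

end LatticeCong

/-- For a finite lattice `L`, the congruence lattice `Con L` is a finite
distributive lattice. -/
theorem stmt_2 (L : Type) [Lattice L] [Finite L] :
    Finite (LatticeCong L) ∧
      ∀ x y z : LatticeCong L, x ⊓ (y ⊔ z) = (x ⊓ y) ⊔ (x ⊓ z) := by
  constructor
  · -- finiteness: inject into relations
    have : Function.Injective (fun θ : LatticeCong L => θ.r) := by
      intro θ ψ h
      cases θ; cases ψ
      simpa using h
    exact Finite.of_injective _ this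
  · intro x y z
    apply le_antisymm
    · intro a b hab
      obtain ⟨hx, hyz⟩ := LatticeCong.inf_r.mp hab
      -- x relates a⊓b to a⊔b
      have hx1 : x.r (a ⊔ b) b := by simpa using x.sup' hx (x.refl b)
      have hx2 : x.r (a ⊓ b) b := by simpa using x.inf' hx (x.refl b)
      have hxib : x.r (a ⊓ b) (a ⊔ b) := x.trans hx2 (x.symm hx1)
      set m : L → L := fun t => (t ⊔ (a ⊓ b)) ⊓ (a ⊔ b) with hm
      have hma : m a = a := by simp [hm]
      have hmb : m b = b := by simp [hm]
      have hxm : ∀ t, x.r (a ⊓ b) (m t) := by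
        intro t
        have h1 : x.r ((a ⊓ b) ⊓ (m t)) ((a ⊔ b) ⊓ (m t)) := x.inf' hxib (x.refl (m t))
        have h2 : (a ⊓ b) ⊓ (m t) = a ⊓ b := by
          apply inf_eq_left.mpr
          exact le_inf (le_sup_right) (inf_le_sup)
        have h3 : (a ⊔ b) ⊓ (m t) = m t := by
          apply inf_eq_right.mpr
          exact inf_le_right
        rwa [h2, h3] at h1
      have hxm2 : ∀ s t, x.r (m s) (m t) := fun s t =>
        x.trans (x.symm (hxm s)) (hxm t)
      -- the chain characterization of y ⊔ z
      rw [LatticeCong.sup_eq_chain] at hyz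
      set w := (x ⊓ y) ⊔ (x ⊓ z) with hw
      have key : ∀ {p q : L},
          Relation.ReflTransGen (fun a b => y.r a b ∨ z.r a b) p q →
          w.r (m p) (m q) := by
        intro p q h
        induction h with
        | refl => exact w.refl _
        | @tail p q _ hstep ih =>
          refine w.trans ih ?_
          have hmstep : (y.r (m p) (m q) ∨ z.r (m p) (m q)) := by
            rcases hstep with h | h
            · exact Or.inl (y.inf' (y.sup' h (y.refl (a ⊓ b))) (y.refl (a ⊔ b)))
            · exact Or.inr (z.inf' (z.sup' h (z.refl (a ⊓ b))) (z.refl (a ⊔ b)))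
          rcases hmstep with h | h
          · exact le_sup_left (a := x ⊓ y) (b := x ⊓ z) _ _
              (LatticeCong.inf_r.mpr ⟨hxm2 p q, h⟩)
          · exact le_sup_right (a := x ⊓ y) (b := x ⊓ z) _ _
              (LatticeCong.inf_r.mpr ⟨hxm2 p q, h⟩)
      have := key hyz
      rwa [hma, hmb] at this
    · exact le_inf (sup_le inf_le_left inf_le_left)
        (sup_le (inf_le_right.trans le_sup_left) (inf_le_right.trans le_sup_right))
end

section
/- If a covering square {a∧b, a, b, a∨b} of a lattice L is extended to a sublattice isomorphic to M3 by an added middle element, then in the resulting lattice the congruences con(a∧b, a) and con(a∧b, b) generated by the two sides of the square are equal. -/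
universe u

/-- A congruence of a lattice: an equivalence relation compatible with `⊔` and `⊓`. -/
structure LatticeCon' (L : Type u) [Lattice L] : Type u where
  r : L → L → Prop
  refl : ∀ a, r a a
  symm : ∀ {a b}, r a b → r b a
  trans : ∀ {a b c}, r a b → r b c → r a c
  sup' : ∀ {a b c d}, r a b → r c d → r (a ⊔ c) (b ⊔ d)
  inf' : ∀ {a b c d}, r a b → r c d → r (a ⊓ c) (b ⊓ d)

namespace LatticeCon'

variable {L : Type u} [Lattice L]

instance : PartialOrder (LatticeCon' L) where
  le θ ψ := ∀ a b, θ.r a b → ψ.r a b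
  le_refl _ _ _ h := h
  le_trans _ _ _ h1 h2 a b h := h2 a b (h1 a b h)
  le_antisymm θ ψ h1 h2 := by
    cases θ; cases ψ
    simp only [mk.injEq]
    funext a b
    exact propext ⟨h1 a b, h2 a b⟩

instance : InfSet (LatticeCon' L) :=
  ⟨fun S =>
    { r := fun a b => ∀ θ ∈ S, θ.r a b
      refl := fun a θ _ => θ.refl a
      symm := fun h θ hθ => θ.symm (h θ hθ)
      trans := fun h1 h2 θ hθ => θ.trans (h1 θ hθ) (h2 θ hθ)
      sup' := fun h1 h2 θ hθ => θ.sup' (h1 θ hθ) (h2 θ hθ)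
      inf' := fun h1 h2 θ hθ => θ.inf' (h1 θ hθ) (h2 θ hθ) }⟩

instance : CompleteLattice (LatticeCon' L) :=
  completeLatticeOfInf _ (fun S =>
    ⟨fun θ hθ a b h => h θ hθ, fun ψ hψ a b h θ hθ => hψ hθ a b h⟩)

/-- The principal congruence generated by a pair `(a, b)`. -/
def gen (a b : L) : LatticeCon' L := sInf {θ : LatticeCon' L | θ.r a b}

/-- A congruence is principal if it is the smallest congruence collapsing some pair. -/
def IsPrincipal (θ : LatticeCon' L) : Prop := ∃ a b : L, θ = gen a b

end LatticeCon'

/-- If a covering square `{a ⊓ b, a, b, a ⊔ b}` of a lattice is completed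
to an `M₃` by a middle element `m`, then the congruences generated by the two sides of
the square coincide. -/
theorem stmt_7 (L : Type) [Lattice L] (a b m : L) (hab : a ≠ b)
    (ha : a ⊓ b ⋖ a) (hb : a ⊓ b ⋖ b)
    (hm1 : a ⊓ b ⋖ m) (hm2 : m ⋖ a ⊔ b)
    (hma : m ⊓ a = a ⊓ b) (hma' : m ⊔ a = a ⊔ b)
    (hmb : m ⊓ b = a ⊓ b) (hmb' : m ⊔ b = a ⊔ b) :
    LatticeCon'.gen (a ⊓ b) a = LatticeCon'.gen (a ⊓ b) b := by
  have step : ∀ (x y : L), m ⊔ x = a ⊔ b → m ⊓ y = a ⊓ b → y ≤ a ⊔ b →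
      ∀ θ : LatticeCon' L, θ.r (a ⊓ b) x → θ.r (a ⊓ b) y := by
    intro x y hx hy hy2 θ h
    have h1 : θ.r (m ⊔ (a ⊓ b)) (m ⊔ x) := θ.sup' (θ.refl m) h
    rw [sup_eq_left.2 hm1.le, hx] at h1
    have h2 : θ.r (m ⊓ y) ((a ⊔ b) ⊓ y) := θ.inf' h1 (θ.refl y)
    rwa [hy, inf_eq_right.2 hy2] at h2
  have hset : {θ : LatticeCon' L | θ.r (a ⊓ b) a} = {θ : LatticeCon' L | θ.r (a ⊓ b) b} := by
    ext θ
    exact ⟨step a b hma' hmb le_sup_right θ, step b a hmb' hma le_sup_left θ⟩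
  unfold LatticeCon'.gen
  rw [hset]
end

section
/- Let L1 and L2 be finite lattices such that a filter F of L1 is isomorphic to an ideal I of L2, and let L be their gluing over this isomorphism. Then every congruence of L restricts to congruences of L1 and L2 that agree on F ≅ I, and conversely every such compatible pair of congruences arises from a unique congruence of L. -/
universe u

/-- A congruence of a lattice: an equivalence relation compatible with `⊔` and `⊓`. -/
structure LatticeCongr (L : Type u) [Lattice L] : Type u where
  r : L → L → Prop
  refl : ∀ a, r a a
  symm : ∀ {a b}, r a b → r b a
  trans : ∀ {a b c}, r a b → r b c → r a c
  sup' : ∀ {a b c d}, r a b → r c d → r (a ⊔ c) (b ⊔ d)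
  inf' : ∀ {a b c d}, r a b → r c d → r (a ⊓ c) (b ⊓ d)

namespace LatticeCongr

variable {L : Type u} [Lattice L]

instance : PartialOrder (LatticeCongr L) where
  le θ ψ := ∀ a b, θ.r a b → ψ.r a b
  le_refl _ _ _ h := h
  le_trans _ _ _ h1 h2 a b h := h2 a b (h1 a b h)
  le_antisymm θ ψ h1 h2 := by
    cases θ; cases ψ
    simp only [mk.injEq]
    funext a b
    exact propext ⟨h1 a b, h2 a b⟩

instance : InfSet (LatticeCongr L) :=
  ⟨fun S =>
    { r := fun a b => ∀ θ ∈ S, θ.r a b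
      refl := fun a θ _ => θ.refl a
      symm := fun h θ hθ => θ.symm (h θ hθ)
      trans := fun h1 h2 θ hθ => θ.trans (h1 θ hθ) (h2 θ hθ)
      sup' := fun h1 h2 θ hθ => θ.sup' (h1 θ hθ) (h2 θ hθ)
      inf' := fun h1 h2 θ hθ => θ.inf' (h1 θ hθ) (h2 θ hθ) }⟩

instance : CompleteLattice (LatticeCongr L) :=
  completeLatticeOfInf _ (fun S =>
    ⟨fun θ hθ a b h => h θ hθ, fun ψ hψ a b h θ hθ => hψ hθ a b h⟩)

/-- The principal congruence generated by a pair `(a, b)`. -/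
def gen (a b : L) : LatticeCongr L := sInf {θ : LatticeCongr L | θ.r a b}

/-- A congruence is principal if it is the smallest congruence collapsing some pair. -/
def IsPrincipal (θ : LatticeCongr L) : Prop := ∃ a b : L, θ = gen a b

end LatticeCongr

/-- Restriction of a lattice congruence to a sublattice. -/
def LatticeCongr.restrict {L : Type u} [Lattice L] (S : Sublattice L)
    (θ : LatticeCongr L) : LatticeCongr S where
  r a b := θ.r a b
  refl a := θ.refl a
  symm h := θ.symm h
  trans h1 h2 := θ.trans h1 h2
  sup' {a b c d} h1 h2 := by
    simpa only [Sublattice.coe_sup] using θ.sup' h1 h2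
  inf' {a b c d} h1 h2 := by
    simpa only [Sublattice.coe_inf] using θ.inf' h1 h2

section GluingAux

variable {L : Type} [Lattice L]

/-- `θ.r a b` iff `θ` collapses the interval `[a ⊓ b, a ⊔ b]`. -/
lemma LatticeCongr.r_inf_sup' (θ : LatticeCongr L) {a b : L} :
    θ.r a b ↔ θ.r (a ⊓ b) (a ⊔ b) := by
  constructor
  · intro h
    have h1 : θ.r (a ⊓ b) b := by
      have := θ.inf' h (θ.refl b)
      rwa [inf_idem] at this
    have h2 : θ.r b (a ⊔ b) := by
      have := θ.sup' (θ.symm h) (θ.refl b)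
      rwa [sup_idem] at this
    exact θ.trans h1 h2
  · intro h
    have h1 : θ.r a (a ⊔ b) := by
      have := θ.sup' (θ.refl a) h
      rwa [sup_inf_self, sup_eq_right.mpr le_sup_left] at this
    have h2 : θ.r b (a ⊔ b) := by
      have := θ.sup' (θ.refl b) h
      rwa [sup_eq_left.mpr inf_le_right, sup_eq_right.mpr le_sup_right] at this
    exact θ.trans h1 (θ.symm h2)

lemma LatticeCongr.ext' {θ ψ : LatticeCongr L} (h : ∀ a b, θ.r a b ↔ ψ.r a b) : θ = ψ := by
  cases θ; cases ψ
  simp only [LatticeCongr.mk.injEq]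
  funext a b
  exact propext (h a b)

/-- The relation of a congruence of a sublattice, transported to the ambient lattice. -/
def RR {S : Sublattice L} (θ : LatticeCongr S) (u v : L) : Prop :=
  ∃ (h : u ∈ S) (h' : v ∈ S), θ.r ⟨u, h⟩ ⟨v, h'⟩

variable {S : Sublattice L} {θ : LatticeCongr S}

lemma rr_refl (θ : LatticeCongr S) {u : L} (h : u ∈ S) : RR θ u u := ⟨h, h, θ.refl _⟩

lemma rr_symm {u v : L} (h : RR θ u v) : RR θ v u := by
  obtain ⟨h1, h2, hr⟩ := h; exact ⟨h2, h1, θ.symm hr⟩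

lemma rr_trans {u v w : L} (h : RR θ u v) (h' : RR θ v w) : RR θ u w := by
  obtain ⟨h1, h2, hr⟩ := h; obtain ⟨h3, h4, hr'⟩ := h'
  exact ⟨h1, h4, θ.trans hr hr'⟩

lemma rr_mem_left {u v : L} (h : RR θ u v) : u ∈ S := h.1
lemma rr_mem_right {u v : L} (h : RR θ u v) : v ∈ S := h.2.1

lemma rr_sup {a b c d : L} (h : RR θ a b) (h' : RR θ c d) : RR θ (a ⊔ c) (b ⊔ d) := by
  obtain ⟨h1, h2, hr⟩ := h; obtain ⟨h3, h4, hr'⟩ := h'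
  refine ⟨S.supClosed h1 h3, S.supClosed h2 h4, ?_⟩
  have := θ.sup' hr hr'
  rwa [Sublattice.mk_sup_mk, Sublattice.mk_sup_mk] at this

lemma rr_inf {a b c d : L} (h : RR θ a b) (h' : RR θ c d) : RR θ (a ⊓ c) (b ⊓ d) := by
  obtain ⟨h1, h2, hr⟩ := h; obtain ⟨h3, h4, hr'⟩ := h'
  refine ⟨S.infClosed h1 h3, S.infClosed h2 h4, ?_⟩
  have := θ.inf' hr hr'
  rwa [Sublattice.mk_inf_mk, Sublattice.mk_inf_mk] at this

lemma rr_coe {x y : S} : RR θ (x : L) (y : L) ↔ θ.r x y := by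
  constructor
  · rintro ⟨h, h', hr⟩
    rwa [Subtype.coe_eta, Subtype.coe_eta] at hr
  · intro h
    exact ⟨x.2, y.2, by rwa [Subtype.coe_eta, Subtype.coe_eta]⟩

end GluingAux
/-- All the hypotheses of the gluing situation bundled together. -/
structure GlueCtx {L : Type} [Lattice L] (L1 L2 : Sublattice L)
    (θ1 : LatticeCongr L1) (θ2 : LatticeCongr L2) : Type where
  htot : ∀ x : L, x ∈ L1 ∨ x ∈ L2
  hdown : IsLowerSet (L1 : Set L)
  hup : IsUpperSet (L2 : Set L)
  u : L
  hu1 : u ∈ L1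
  hu2 : u ∈ L2
  hagree : ∀ (x y : L) (hx1 : x ∈ L1) (hx2 : x ∈ L2) (hy1 : y ∈ L1) (hy2 : y ∈ L2),
    θ1.r ⟨x, hx1⟩ ⟨y, hy1⟩ ↔ θ2.r ⟨x, hx2⟩ ⟨y, hy2⟩

/-- The elementary glued relation. -/
def EE {L : Type} [Lattice L] {L1 L2 : Sublattice L}
    (θ1 : LatticeCongr L1) (θ2 : LatticeCongr L2) (u v : L) : Prop :=
  RR θ1 u v ∨ RR θ2 u v

/-- The glued relation on comparable pairs. -/
def SS {L : Type} [Lattice L] {L1 L2 : Sublattice L}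
    (θ1 : LatticeCongr L1) (θ2 : LatticeCongr L2) (a b : L) : Prop :=
  ∃ m, a ≤ m ∧ m ≤ b ∧ EE θ1 θ2 a m ∧ EE θ1 θ2 m b

namespace GlueCtx

variable {L : Type} [Lattice L] {L1 L2 : Sublattice L}
  {θ1 : LatticeCongr L1} {θ2 : LatticeCongr L2} (C : GlueCtx L1 L2 θ1 θ2)

include C

lemma mem1 {x : L} (h : x ∉ L2) : x ∈ L1 := (C.htot x).resolve_right h
lemma mem2 {x : L} (h : x ∉ L1) : x ∈ L2 := (C.htot x).resolve_left h

/-- Transfer from `θ1` to `θ2` on the overlap. -/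
lemma t12 {x y : L} (hx : x ∈ L2) (hy : y ∈ L2) (h : RR θ1 x y) : RR θ2 x y := by
  obtain ⟨h1, h1', hr⟩ := h
  exact ⟨hx, hy, (C.hagree x y h1 hx h1' hy).1 hr⟩

/-- Transfer from `θ2` to `θ1` on the overlap. -/
lemma t21 {x y : L} (hx : x ∈ L1) (hy : y ∈ L1) (h : RR θ2 x y) : RR θ1 x y := by
  obtain ⟨h2, h2', hr⟩ := h
  exact ⟨hx, hy, (C.hagree x y hx h2 hy h2').2 hr⟩

lemma e1 {x y : L} (hx : x ∈ L1) (hy : y ∈ L1) (h : EE θ1 θ2 x y) : RR θ1 x y :=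
  h.elim id (C.t21 hx hy)

lemma e2 {x y : L} (hx : x ∈ L2) (hy : y ∈ L2) (h : EE θ1 θ2 x y) : RR θ2 x y :=
  h.elim (C.t12 hx hy) id

lemma ee_refl (x : L) : EE θ1 θ2 x x :=
  (C.htot x).elim (fun h => Or.inl (rr_refl θ1 h)) (fun h => Or.inr (rr_refl θ2 h))

lemma ss_refl (x : L) : SS θ1 θ2 x x := ⟨x, le_rfl, le_rfl, C.ee_refl x, C.ee_refl x⟩

lemma ss_char1 {a b : L} (hab : a ≤ b) (hb : b ∈ L1) : SS θ1 θ2 a b ↔ RR θ1 a b := by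
  constructor
  · rintro ⟨m, ham, hmb, h1, h2⟩
    have hm : m ∈ L1 := C.hdown hmb hb
    have ha : a ∈ L1 := C.hdown ham hm
    exact rr_trans (C.e1 ha hm h1) (C.e1 hm hb h2)
  · intro h
    exact ⟨b, hab, le_rfl, Or.inl h, C.ee_refl b⟩

lemma ss_char2 {a b : L} (hab : a ≤ b) (ha : a ∈ L2) : SS θ1 θ2 a b ↔ RR θ2 a b := by
  constructor
  · rintro ⟨m, ham, hmb, h1, h2⟩
    have hm : m ∈ L2 := C.hup ham ha
    have hb : b ∈ L2 := C.hup hmb hm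
    exact rr_trans (C.e2 ha hm h1) (C.e2 hm hb h2)
  · intro h
    exact ⟨a, le_rfl, hab, C.ee_refl a, Or.inr h⟩

lemma ss_mixed {a b : L} (hab : a ≤ b) (h : SS θ1 θ2 a b) (ha : a ∈ L1) (hb : b ∈ L2) :
    ∃ m, a ≤ m ∧ m ≤ b ∧ RR θ1 a m ∧ RR θ2 m b := by
  by_cases hb1 : b ∈ L1
  · exact ⟨b, hab, le_rfl, (C.ss_char1 hab hb1).1 h, rr_refl θ2 hb⟩
  by_cases ha2 : a ∈ L2
  · exact ⟨a, le_rfl, hab, rr_refl θ1 ha, (C.ss_char2 hab ha2).1 h⟩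
  obtain ⟨m, ham, hmb, h1, h2⟩ := h
  rcases h1 with h1 | h1
  · rcases h2 with h2 | h2
    · exact absurd (rr_mem_right h2) hb1
    · exact ⟨m, ham, hmb, h1, h2⟩
  · exact absurd (rr_mem_left h1) ha2

end GlueCtx
namespace GlueCtx

variable {L : Type} [Lattice L] {L1 L2 : Sublattice L}
  {θ1 : LatticeCongr L1} {θ2 : LatticeCongr L2} (C : GlueCtx L1 L2 θ1 θ2)

include C

lemma ss_convex {a a' b' b : L} (h1 : a ≤ a') (h2 : a' ≤ b') (h3 : b' ≤ b)
    (hS : SS θ1 θ2 a b) : SS θ1 θ2 a' b' := by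
  have hab : a ≤ b := h1.trans (h2.trans h3)
  by_cases hb'1 : b' ∈ L1
  · have ha'1 : a' ∈ L1 := C.hdown h2 hb'1
    have ha1 : a ∈ L1 := C.hdown h1 ha'1
    refine (C.ss_char1 h2 hb'1).2 ?_
    by_cases hb1 : b ∈ L1
    · have h := (C.ss_char1 hab hb1).1 hS
      have h' := rr_sup h (rr_refl θ1 ha'1)
      rw [sup_eq_right.mpr h1, sup_eq_left.mpr (h2.trans h3)] at h'
      have h'' := rr_inf h' (rr_refl θ1 hb'1)
      rwa [inf_eq_left.mpr h2, inf_eq_right.mpr h3] at h''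
    · have hb2 : b ∈ L2 := C.mem2 hb1
      obtain ⟨m, ham, hmb, hm1r, hm2r⟩ := C.ss_mixed hab hS ha1 hb2
      have hm1 : m ∈ L1 := rr_mem_right hm1r
      have hm2 : m ∈ L2 := rr_mem_left hm2r
      have hwm1 : m ⊔ b' ∈ L1 := L1.supClosed hm1 hb'1
      have hwm2 : m ⊔ b' ∈ L2 := C.hup le_sup_left hm2
      have hwb : m ⊔ b' ≤ b := sup_le hmb h3
      have s1 := rr_inf hm2r (rr_refl θ2 hwm2)
      rw [inf_eq_left.mpr le_sup_left, inf_eq_right.mpr hwb] at s1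
      have s2 : RR θ1 a (m ⊔ b') := rr_trans hm1r (C.t21 hm1 hwm1 s1)
      have s3 := rr_inf s2 (rr_refl θ1 hb'1)
      rw [inf_eq_left.mpr (h1.trans h2), inf_eq_right.mpr le_sup_right] at s3
      have s4 := rr_sup s3 (rr_refl θ1 ha'1)
      rwa [sup_eq_right.mpr h1, sup_eq_left.mpr h2] at s4
  · by_cases ha'2 : a' ∈ L2
    · have hb'2 : b' ∈ L2 := C.hup h2 ha'2
      have hb2 : b ∈ L2 := C.hup h3 hb'2
      refine (C.ss_char2 h2 ha'2).2 ?_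
      by_cases ha2 : a ∈ L2
      · have h := (C.ss_char2 hab ha2).1 hS
        have h' := rr_sup h (rr_refl θ2 ha'2)
        rw [sup_eq_right.mpr h1, sup_eq_left.mpr (h2.trans h3)] at h'
        have h'' := rr_inf h' (rr_refl θ2 hb'2)
        rwa [inf_eq_left.mpr h2, inf_eq_right.mpr h3] at h''
      · have ha1 : a ∈ L1 := C.mem1 ha2
        obtain ⟨m, ham, hmb, hm1r, hm2r⟩ := C.ss_mixed hab hS ha1 hb2
        have hm1 : m ∈ L1 := rr_mem_right hm1r
        have hm2 : m ∈ L2 := rr_mem_left hm2r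
        have hma'2 : m ⊓ a' ∈ L2 := L2.infClosed hm2 ha'2
        have hma'1 : m ⊓ a' ∈ L1 := C.hdown inf_le_left hm1
        have hn2 : a ⊔ m ⊓ a' ∈ L2 := C.hup le_sup_right hma'2
        have s1 := rr_sup hm1r (rr_refl θ1 hma'1)
        rw [sup_eq_left.mpr (inf_le_left : m ⊓ a' ≤ m)] at s1
        have s2 : RR θ2 (a ⊔ m ⊓ a') b := rr_trans (C.t12 hn2 hm2 s1) hm2r
        have s3 := rr_sup s2 (rr_refl θ2 ha'2)
        rw [sup_eq_right.mpr (sup_le h1 inf_le_right), sup_eq_left.mpr (h2.trans h3)] at s3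
        have s4 := rr_inf s3 (rr_refl θ2 hb'2)
        rwa [inf_eq_left.mpr h2, inf_eq_right.mpr h3] at s4
    · have ha'1 : a' ∈ L1 := C.mem1 ha'2
      have hb'2 : b' ∈ L2 := C.mem2 hb'1
      have ha1 : a ∈ L1 := C.hdown h1 ha'1
      have hb2 : b ∈ L2 := C.hup h3 hb'2
      obtain ⟨m, ham, hmb, hm1r, hm2r⟩ := C.ss_mixed hab hS ha1 hb2
      have hm1 : m ∈ L1 := rr_mem_right hm1r
      have hm2 : m ∈ L2 := rr_mem_left hm2r
      have hw1 : m ⊔ a' ∈ L1 := L1.supClosed hm1 ha'1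
      have hw2 : m ⊔ a' ∈ L2 := C.hup le_sup_left hm2
      have hwb : m ⊔ a' ≤ b := sup_le hmb (h2.trans h3)
      have hm'2 : (m ⊔ a') ⊓ b' ∈ L2 := L2.infClosed hw2 hb'2
      have hm'1 : (m ⊔ a') ⊓ b' ∈ L1 := C.hdown inf_le_left hw1
      have ha'm' : a' ≤ (m ⊔ a') ⊓ b' := le_inf le_sup_right h2
      have s1 := rr_sup hm1r (rr_refl θ1 ha'1)
      rw [sup_eq_right.mpr h1] at s1
      have s2 := rr_inf s1 (rr_refl θ1 hm'1)
      rw [inf_eq_left.mpr ha'm', inf_eq_right.mpr inf_le_left] at s2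
      have t1 := rr_sup hm2r (rr_refl θ2 hw2)
      rw [sup_eq_right.mpr le_sup_left, sup_eq_left.mpr hwb] at t1
      have t2 := rr_inf t1 (rr_refl θ2 hb'2)
      rw [inf_eq_right.mpr h3] at t2
      exact ⟨(m ⊔ a') ⊓ b', ha'm', inf_le_right, Or.inl s2, Or.inr t2⟩

lemma ss_trans_le {a b c : L} (hab : a ≤ b) (hbc : b ≤ c)
    (h1 : SS θ1 θ2 a b) (h2 : SS θ1 θ2 b c) : SS θ1 θ2 a c := by
  have hac : a ≤ c := hab.trans hbc
  by_cases hc1 : c ∈ L1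
  · have hb1 : b ∈ L1 := C.hdown hbc hc1
    exact (C.ss_char1 hac hc1).2
      (rr_trans ((C.ss_char1 hab hb1).1 h1) ((C.ss_char1 hbc hc1).1 h2))
  by_cases ha2 : a ∈ L2
  · have hb2 : b ∈ L2 := C.hup hab ha2
    exact (C.ss_char2 hac ha2).2
      (rr_trans ((C.ss_char2 hab ha2).1 h1) ((C.ss_char2 hbc hb2).1 h2))
  have ha1 : a ∈ L1 := C.mem1 ha2
  have hc2 : c ∈ L2 := C.mem2 hc1
  by_cases hb1 : b ∈ L1
  · have r1 := (C.ss_char1 hab hb1).1 h1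
    obtain ⟨m, hbm, hmc, hm1r, hm2r⟩ := C.ss_mixed hbc h2 hb1 hc2
    exact ⟨m, hab.trans hbm, hmc, Or.inl (rr_trans r1 hm1r), Or.inr hm2r⟩
  · have hb2 : b ∈ L2 := C.mem2 hb1
    have r2 := (C.ss_char2 hbc hb2).1 h2
    obtain ⟨m, ham, hmb, hm1r, hm2r⟩ := C.ss_mixed hab h1 ha1 hb2
    exact ⟨m, ham, hmb.trans hbc, Or.inl hm1r, Or.inr (rr_trans hm2r r2)⟩

lemma ss_sup {a b : L} (c : L) (hab : a ≤ b) (h : SS θ1 θ2 a b) :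
    SS θ1 θ2 (a ⊔ c) (b ⊔ c) := by
  have habc : a ⊔ c ≤ b ⊔ c := sup_le_sup_right hab c
  by_cases hbc1 : b ⊔ c ∈ L1
  · have hb1 : b ∈ L1 := C.hdown le_sup_left hbc1
    have hc1 : c ∈ L1 := C.hdown le_sup_right hbc1
    exact (C.ss_char1 habc hbc1).2 (rr_sup ((C.ss_char1 hab hb1).1 h) (rr_refl θ1 hc1))
  by_cases hb1 : b ∈ L1
  · have hr := (C.ss_char1 hab hb1).1 h
    by_cases hc1 : c ∈ L1
    · exact absurd (L1.supClosed hb1 hc1) hbc1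
    have hc2 : c ∈ L2 := C.mem2 hc1
    have hac2 : a ⊔ c ∈ L2 := C.hup le_sup_right hc2
    have hw1 : C.u ⊓ (a ⊔ c) ∈ L1 := C.hdown inf_le_left C.hu1
    have hw2 : C.u ⊓ (a ⊔ c) ∈ L2 := L2.infClosed C.hu2 hac2
    have haw2 : a ⊔ C.u ⊓ (a ⊔ c) ∈ L2 := C.hup le_sup_right hw2
    have hbw2 : b ⊔ C.u ⊓ (a ⊔ c) ∈ L2 := C.hup le_sup_right hw2
    have s1 := rr_sup hr (rr_refl θ1 hw1)
    have s2 := rr_sup (C.t12 haw2 hbw2 s1) (rr_refl θ2 hc2)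
    have e1 : a ⊔ C.u ⊓ (a ⊔ c) ⊔ c = a ⊔ c :=
      le_antisymm (sup_le (sup_le le_sup_left inf_le_right) le_sup_right)
        (sup_le_sup_right le_sup_left c)
    have e2 : b ⊔ C.u ⊓ (a ⊔ c) ⊔ c = b ⊔ c :=
      le_antisymm (sup_le (sup_le le_sup_left (inf_le_right.trans habc)) le_sup_right)
        (sup_le_sup_right le_sup_left c)
    rw [e1, e2] at s2
    exact (C.ss_char2 habc hac2).2 s2
  have hb2 : b ∈ L2 := C.mem2 hb1
  by_cases ha2 : a ∈ L2
  · have hr := (C.ss_char2 hab ha2).1 h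
    have hac2 : a ⊔ c ∈ L2 := C.hup le_sup_left ha2
    have s1 := rr_sup hr (rr_refl θ2 hac2)
    have e1 : a ⊔ (a ⊔ c) = a ⊔ c := sup_eq_right.mpr le_sup_left
    have e2 : b ⊔ (a ⊔ c) = b ⊔ c :=
      le_antisymm (sup_le le_sup_left (sup_le (hab.trans le_sup_left) le_sup_right))
        (sup_le le_sup_left (le_sup_right.trans le_sup_right))
    rw [e1, e2] at s1
    exact (C.ss_char2 habc hac2).2 s1
  · have ha1 : a ∈ L1 := C.mem1 ha2
    obtain ⟨m, ham, hmb, hm1r, hm2r⟩ := C.ss_mixed hab h ha1 hb2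
    have hm1 : m ∈ L1 := rr_mem_right hm1r
    have hm2 : m ∈ L2 := rr_mem_left hm2r
    have hmc2 : m ⊔ c ∈ L2 := C.hup le_sup_left hm2
    have t1 := rr_sup hm2r (rr_refl θ2 hmc2)
    have e1 : m ⊔ (m ⊔ c) = m ⊔ c := sup_eq_right.mpr le_sup_left
    have e2 : b ⊔ (m ⊔ c) = b ⊔ c :=
      le_antisymm (sup_le le_sup_left (sup_le (hmb.trans le_sup_left) le_sup_right))
        (sup_le le_sup_left (le_sup_right.trans le_sup_right))
    rw [e1, e2] at t1
    by_cases hc1 : c ∈ L1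
    · have s1 := rr_sup hm1r (rr_refl θ1 hc1)
      exact ⟨m ⊔ c, sup_le_sup_right ham c, sup_le_sup_right hmb c, Or.inl s1, Or.inr t1⟩
    · have hc2 : c ∈ L2 := C.mem2 hc1
      have hac2 : a ⊔ c ∈ L2 := C.hup le_sup_right hc2
      have hw1 : C.u ⊓ (a ⊔ c) ∈ L1 := C.hdown inf_le_left C.hu1
      have hw2 : C.u ⊓ (a ⊔ c) ∈ L2 := L2.infClosed C.hu2 hac2
      have haw2 : a ⊔ C.u ⊓ (a ⊔ c) ∈ L2 := C.hup le_sup_right hw2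
      have hmw2 : m ⊔ C.u ⊓ (a ⊔ c) ∈ L2 := C.hup le_sup_right hw2
      have s1 := rr_sup hm1r (rr_refl θ1 hw1)
      have s2 := rr_sup (C.t12 haw2 hmw2 s1) (rr_refl θ2 hc2)
      have e3 : a ⊔ C.u ⊓ (a ⊔ c) ⊔ c = a ⊔ c :=
        le_antisymm (sup_le (sup_le le_sup_left inf_le_right) le_sup_right)
          (sup_le_sup_right le_sup_left c)
      have e4 : m ⊔ C.u ⊓ (a ⊔ c) ⊔ c = m ⊔ c :=
        le_antisymm
          (sup_le (sup_le le_sup_left (inf_le_right.trans (sup_le_sup_right ham c)))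
            le_sup_right)
          (sup_le_sup_right le_sup_left c)
      rw [e3, e4] at s2
      exact (C.ss_char2 habc hac2).2 (rr_trans s2 t1)

lemma ss_inf {a b : L} (c : L) (hab : a ≤ b) (h : SS θ1 θ2 a b) :
    SS θ1 θ2 (a ⊓ c) (b ⊓ c) := by
  have habc : a ⊓ c ≤ b ⊓ c := inf_le_inf_right c hab
  by_cases hac2 : a ⊓ c ∈ L2
  · have ha2 : a ∈ L2 := C.hup inf_le_left hac2
    have hc2 : c ∈ L2 := C.hup inf_le_right hac2
    exact (C.ss_char2 habc hac2).2 (rr_inf ((C.ss_char2 hab ha2).1 h) (rr_refl θ2 hc2))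
  have hac1 : a ⊓ c ∈ L1 := C.mem1 hac2
  by_cases ha2 : a ∈ L2
  · have hr := (C.ss_char2 hab ha2).1 h
    by_cases hc2 : c ∈ L2
    · exact absurd (L2.infClosed ha2 hc2) hac2
    have hc1 : c ∈ L1 := C.mem1 hc2
    have hbc1 : b ⊓ c ∈ L1 := C.hdown inf_le_right hc1
    have hw2 : C.u ⊔ b ⊓ c ∈ L2 := C.hup le_sup_left C.hu2
    have hw1 : C.u ⊔ b ⊓ c ∈ L1 := L1.supClosed C.hu1 hbc1
    have haw1 : a ⊓ (C.u ⊔ b ⊓ c) ∈ L1 := C.hdown inf_le_right hw1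
    have hbw1 : b ⊓ (C.u ⊔ b ⊓ c) ∈ L1 := C.hdown inf_le_right hw1
    have s1 := rr_inf hr (rr_refl θ2 hw2)
    have s2 := rr_inf (C.t21 haw1 hbw1 s1) (rr_refl θ1 hc1)
    have e1 : a ⊓ (C.u ⊔ b ⊓ c) ⊓ c = a ⊓ c :=
      le_antisymm (inf_le_inf_right c inf_le_left)
        (le_inf (le_inf inf_le_left (habc.trans le_sup_right)) inf_le_right)
    have e2 : b ⊓ (C.u ⊔ b ⊓ c) ⊓ c = b ⊓ c :=
      le_antisymm (inf_le_inf_right c inf_le_left)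
        (le_inf (le_inf inf_le_left le_sup_right) inf_le_right)
    rw [e1, e2] at s2
    exact (C.ss_char1 habc hbc1).2 s2
  have ha1 : a ∈ L1 := C.mem1 ha2
  by_cases hb1 : b ∈ L1
  · have hr := (C.ss_char1 hab hb1).1 h
    have hbc1 : b ⊓ c ∈ L1 := C.hdown inf_le_left hb1
    have s1 := rr_inf hr (rr_refl θ1 hbc1)
    have e1 : a ⊓ (b ⊓ c) = a ⊓ c :=
      le_antisymm (le_inf inf_le_left (inf_le_right.trans inf_le_right))
        (le_inf inf_le_left (inf_le_inf_right c hab))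
    have e2 : b ⊓ (b ⊓ c) = b ⊓ c := inf_eq_right.mpr inf_le_left
    rw [e1, e2] at s1
    exact (C.ss_char1 habc hbc1).2 s1
  · have hb2 : b ∈ L2 := C.mem2 hb1
    obtain ⟨m, ham, hmb, hm1r, hm2r⟩ := C.ss_mixed hab h ha1 hb2
    have hm1 : m ∈ L1 := rr_mem_right hm1r
    have hm2 : m ∈ L2 := rr_mem_left hm2r
    have hmc1 : m ⊓ c ∈ L1 := C.hdown inf_le_left hm1
    have t1 := rr_inf hm1r (rr_refl θ1 hmc1)
    have e1 : a ⊓ (m ⊓ c) = a ⊓ c :=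
      le_antisymm (le_inf inf_le_left (inf_le_right.trans inf_le_right))
        (le_inf inf_le_left (inf_le_inf_right c ham))
    have e2 : m ⊓ (m ⊓ c) = m ⊓ c := inf_eq_right.mpr inf_le_left
    rw [e1, e2] at t1
    by_cases hc2 : c ∈ L2
    · have s1 := rr_inf hm2r (rr_refl θ2 hc2)
      exact ⟨m ⊓ c, inf_le_inf_right c ham, inf_le_inf_right c hmb, Or.inl t1, Or.inr s1⟩
    · have hc1 : c ∈ L1 := C.mem1 hc2
      have hbc1 : b ⊓ c ∈ L1 := C.hdown inf_le_right hc1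
      have hw2 : C.u ⊔ b ⊓ c ∈ L2 := C.hup le_sup_left C.hu2
      have hw1 : C.u ⊔ b ⊓ c ∈ L1 := L1.supClosed C.hu1 hbc1
      have hmw1 : m ⊓ (C.u ⊔ b ⊓ c) ∈ L1 := C.hdown inf_le_right hw1
      have hbw1 : b ⊓ (C.u ⊔ b ⊓ c) ∈ L1 := C.hdown inf_le_right hw1
      have s1 := rr_inf hm2r (rr_refl θ2 hw2)
      have s2 := rr_inf (C.t21 hmw1 hbw1 s1) (rr_refl θ1 hc1)
      have e3 : m ⊓ (C.u ⊔ b ⊓ c) ⊓ c = m ⊓ c :=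
        le_antisymm (inf_le_inf_right c inf_le_left)
          (le_inf (le_inf inf_le_left ((inf_le_inf_right c hmb).trans le_sup_right))
            inf_le_right)
      have e4 : b ⊓ (C.u ⊔ b ⊓ c) ⊓ c = b ⊓ c :=
        le_antisymm (inf_le_inf_right c inf_le_left)
          (le_inf (le_inf inf_le_left le_sup_right) inf_le_right)
      rw [e3, e4] at s2
      exact (C.ss_char1 habc hbc1).2 (rr_trans t1 s2)

end GlueCtx
/-- The glued relation on all pairs. -/
def GR {L : Type} [Lattice L] {L1 L2 : Sublattice L}
    (θ1 : LatticeCongr L1) (θ2 : LatticeCongr L2) (x y : L) : Prop :=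
  SS θ1 θ2 (x ⊓ y) (x ⊔ y)

namespace GlueCtx

variable {L : Type} [Lattice L] {L1 L2 : Sublattice L}
  {θ1 : LatticeCongr L1} {θ2 : LatticeCongr L2} (C : GlueCtx L1 L2 θ1 θ2)

include C

lemma gr_refl (x : L) : GR θ1 θ2 x x := by
  show SS θ1 θ2 (x ⊓ x) (x ⊔ x)
  rw [inf_idem, sup_idem]
  exact C.ss_refl x

omit C in
lemma gr_symm {x y : L} (h : GR θ1 θ2 x y) : GR θ1 θ2 y x := by
  show SS θ1 θ2 (y ⊓ x) (y ⊔ x)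
  rw [inf_comm y x, sup_comm y x]
  exact h

lemma gr_trans {x y z : L} (hxy : GR θ1 θ2 x y) (hyz : GR θ1 θ2 y z) : GR θ1 θ2 x z := by
  have A1 : SS θ1 θ2 y (x ⊔ y) := by
    have := C.ss_sup y inf_le_sup hxy
    rwa [sup_eq_right.mpr inf_le_right, sup_eq_left.mpr le_sup_right] at this
  have A2 : SS θ1 θ2 (x ⊔ y) (x ⊔ y ⊔ z) := by
    have := C.ss_sup (x ⊔ y) inf_le_sup hyz
    have e1 : y ⊓ z ⊔ (x ⊔ y) = x ⊔ y := sup_eq_right.mpr (inf_le_left.trans le_sup_right)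
    have e2 : y ⊔ z ⊔ (x ⊔ y) = x ⊔ y ⊔ z :=
      le_antisymm (sup_le (sup_le (le_sup_right.trans le_sup_left) le_sup_right) le_sup_left)
        (sup_le le_sup_right (le_sup_right.trans le_sup_left))
    rw [e1, e2] at this; exact this
  have B1 : SS θ1 θ2 (x ⊓ y) y := by
    have := C.ss_inf y inf_le_sup hxy
    rwa [inf_eq_left.mpr (inf_le_right : x ⊓ y ≤ y), inf_eq_right.mpr (le_sup_right : y ≤ x ⊔ y)] at this
  have B2 : SS θ1 θ2 (x ⊓ y ⊓ z) (x ⊓ y) := by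
    have := C.ss_inf (x ⊓ y) inf_le_sup hyz
    have e1 : y ⊓ z ⊓ (x ⊓ y) = x ⊓ y ⊓ z :=
      le_antisymm (le_inf inf_le_right (inf_le_left.trans inf_le_right))
        (le_inf (le_inf (inf_le_left.trans inf_le_right) inf_le_right) inf_le_left)
    have e2 : (y ⊔ z) ⊓ (x ⊓ y) = x ⊓ y :=
      inf_eq_right.mpr (inf_le_right.trans le_sup_left)
    rw [e1, e2] at this; exact this
  have hB : SS θ1 θ2 (x ⊓ y ⊓ z) y := C.ss_trans_le inf_le_left inf_le_right B2 B1
  have hA : SS θ1 θ2 y (x ⊔ y ⊔ z) := C.ss_trans_le le_sup_right le_sup_left A1 A2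
  have hD : SS θ1 θ2 (x ⊓ y ⊓ z) (x ⊔ y ⊔ z) :=
    C.ss_trans_le (inf_le_left.trans inf_le_right) (le_sup_right.trans le_sup_left) hB hA
  exact C.ss_convex (le_inf (inf_le_left.trans inf_le_left) inf_le_right)
    inf_le_sup (sup_le (le_sup_left.trans le_sup_left) le_sup_right) hD

lemma gr_sup_right (c : L) {x y : L} (h : GR θ1 θ2 x y) : GR θ1 θ2 (x ⊔ c) (y ⊔ c) := by
  have h' := C.ss_sup c inf_le_sup h
  exact C.ss_convex
    (le_inf (sup_le_sup_right inf_le_left c) (sup_le_sup_right inf_le_right c))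
    inf_le_sup
    (sup_le (sup_le (le_sup_left.trans le_sup_left) le_sup_right)
      (sup_le (le_sup_right.trans le_sup_left) le_sup_right)) h'

lemma gr_inf_right (c : L) {x y : L} (h : GR θ1 θ2 x y) : GR θ1 θ2 (x ⊓ c) (y ⊓ c) := by
  have h' := C.ss_inf c inf_le_sup h
  exact C.ss_convex
    (le_inf (le_inf (inf_le_left.trans inf_le_left) inf_le_right)
      (le_inf (inf_le_left.trans inf_le_right) inf_le_right))
    inf_le_sup
    (sup_le (inf_le_inf_right c le_sup_left) (inf_le_inf_right c le_sup_right)) h'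

/-- The glued congruence. -/
def glue : LatticeCongr L where
  r := GR θ1 θ2
  refl := C.gr_refl
  symm := gr_symm
  trans := C.gr_trans
  sup' {a b c d} h1 h2 :=
    C.gr_trans (C.gr_sup_right c h1) (by
      have := C.gr_sup_right b h2
      rwa [sup_comm c b, sup_comm d b] at this)
  inf' {a b c d} h1 h2 :=
    C.gr_trans (C.gr_inf_right c h1) (by
      have := C.gr_inf_right b h2
      rwa [inf_comm c b, inf_comm d b] at this)

lemma glue_restrict1 : C.glue.restrict L1 = θ1 := by
  apply LatticeCongr.ext'
  intro p q
  show GR θ1 θ2 (p : L) (q : L) ↔ θ1.r p q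
  have hs : ((p : L) ⊔ (q : L)) ∈ L1 := L1.supClosed p.2 q.2
  constructor
  · intro h
    have h' : RR θ1 ((p : L) ⊓ q) ((p : L) ⊔ q) := (C.ss_char1 inf_le_sup hs).1 h
    have h'' : θ1.r (p ⊓ q) (p ⊔ q) := (rr_coe (x := p ⊓ q) (y := p ⊔ q)).1 h'
    exact (LatticeCongr.r_inf_sup' θ1).2 h''
  · intro h
    exact (C.ss_char1 inf_le_sup hs).2
      ((rr_coe (x := p ⊓ q) (y := p ⊔ q)).2 ((LatticeCongr.r_inf_sup' θ1).1 h))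

lemma glue_restrict2 : C.glue.restrict L2 = θ2 := by
  apply LatticeCongr.ext'
  intro p q
  show GR θ1 θ2 (p : L) (q : L) ↔ θ2.r p q
  have hs : ((p : L) ⊓ (q : L)) ∈ L2 := L2.infClosed p.2 q.2
  constructor
  · intro h
    have h' : RR θ2 ((p : L) ⊓ q) ((p : L) ⊔ q) := (C.ss_char2 inf_le_sup hs).1 h
    have h'' : θ2.r (p ⊓ q) (p ⊔ q) := (rr_coe (x := p ⊓ q) (y := p ⊔ q)).1 h'
    exact (LatticeCongr.r_inf_sup' θ2).2 h''
  · intro h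
    exact (C.ss_char2 inf_le_sup hs).2
      ((rr_coe (x := p ⊓ q) (y := p ⊔ q)).2 ((LatticeCongr.r_inf_sup' θ2).1 h))

lemma glue_unique (ψ : LatticeCongr L) (h1 : ψ.restrict L1 = θ1) (h2 : ψ.restrict L2 = θ2) :
    ψ = C.glue := by
  have hr1 : ∀ (u v : L) (hu : u ∈ L1) (hv : v ∈ L1), ψ.r u v ↔ θ1.r ⟨u, hu⟩ ⟨v, hv⟩ := by
    intro u v hu hv
    rw [← h1]; exact Iff.rfl
  have hr2 : ∀ (u v : L) (hu : u ∈ L2) (hv : v ∈ L2), ψ.r u v ↔ θ2.r ⟨u, hu⟩ ⟨v, hv⟩ := by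
    intro u v hu hv
    rw [← h2]; exact Iff.rfl
  apply LatticeCongr.ext'
  intro x y
  show ψ.r x y ↔ GR θ1 θ2 x y
  rw [LatticeCongr.r_inf_sup' ψ]
  show ψ.r (x ⊓ y) (x ⊔ y) ↔ SS θ1 θ2 (x ⊓ y) (x ⊔ y)
  set a := x ⊓ y with hadef
  set b := x ⊔ y with hbdef
  have hab : a ≤ b := inf_le_sup
  constructor
  · intro h
    by_cases hb1 : b ∈ L1
    · have ha1 : a ∈ L1 := C.hdown hab hb1
      exact (C.ss_char1 hab hb1).2 ⟨ha1, hb1, (hr1 a b ha1 hb1).1 h⟩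
    have hb2 : b ∈ L2 := C.mem2 hb1
    by_cases ha2 : a ∈ L2
    · exact (C.ss_char2 hab ha2).2 ⟨ha2, hb2, (hr2 a b ha2 hb2).1 h⟩
    have ha1 : a ∈ L1 := C.mem1 ha2
    have hub1 : C.u ⊓ b ∈ L1 := C.hdown inf_le_left C.hu1
    have hub2 : C.u ⊓ b ∈ L2 := L2.infClosed C.hu2 hb2
    have hm1 : a ⊔ C.u ⊓ b ∈ L1 := L1.supClosed ha1 hub1
    have hm2 : a ⊔ C.u ⊓ b ∈ L2 := C.hup le_sup_right hub2
    have ham : a ≤ a ⊔ C.u ⊓ b := le_sup_left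
    have hmb : a ⊔ C.u ⊓ b ≤ b := sup_le hab inf_le_right
    have pam : ψ.r a (a ⊔ C.u ⊓ b) := by
      have := ψ.inf' h (ψ.refl (a ⊔ C.u ⊓ b))
      rwa [inf_eq_left.mpr ham, inf_eq_right.mpr hmb] at this
    have pmb : ψ.r (a ⊔ C.u ⊓ b) b := by
      have := ψ.sup' h (ψ.refl (a ⊔ C.u ⊓ b))
      rwa [sup_eq_right.mpr ham, sup_eq_left.mpr hmb] at this
    exact ⟨a ⊔ C.u ⊓ b, ham, hmb,
      Or.inl ⟨ha1, hm1, (hr1 a _ ha1 hm1).1 pam⟩,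
      Or.inr ⟨hm2, hb2, (hr2 _ b hm2 hb2).1 pmb⟩⟩
  · rintro ⟨m, ham, hmb, e1, e2⟩
    have p1 : ψ.r a m := by
      rcases e1 with ⟨hu, hv, hr⟩ | ⟨hu, hv, hr⟩
      · exact (hr1 a m hu hv).2 hr
      · exact (hr2 a m hu hv).2 hr
    have p2 : ψ.r m b := by
      rcases e2 with ⟨hu, hv, hr⟩ | ⟨hu, hv, hr⟩
      · exact (hr1 m b hu hv).2 hr
      · exact (hr2 m b hu hv).2 hr
    exact ψ.trans p1 p2

end GlueCtx

/-- Let `L` be the gluing of the finite lattices `L₁` and `L₂`, i.e.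
`L₁` is an ideal of `L`, `L₂` is a filter of `L`, they cover `L`, and they meet in a
nonempty set `F`.  Then every congruence of `L` restricts to congruences of `L₁` and
`L₂` agreeing on `F`, and conversely every pair of congruences of `L₁` and `L₂`
agreeing on `F` arises from a unique congruence of `L`. -/
theorem stmt_17 (L : Type) [Lattice L] [Finite L] (L1 L2 : Sublattice L)
    (hcover : (L1 : Set L) ∪ (L2 : Set L) = Set.univ)
    (hdown : IsLowerSet (L1 : Set L)) (hup : IsUpperSet (L2 : Set L))
    (hne : ((L1 : Set L) ∩ (L2 : Set L)).Nonempty) :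
    (∀ θ : LatticeCongr L, ∀ (x y : L) (hx1 : x ∈ L1) (hx2 : x ∈ L2)
        (hy1 : y ∈ L1) (hy2 : y ∈ L2),
        (θ.restrict L1).r ⟨x, hx1⟩ ⟨y, hy1⟩ ↔ (θ.restrict L2).r ⟨x, hx2⟩ ⟨y, hy2⟩) ∧
      ∀ (θ1 : LatticeCongr L1) (θ2 : LatticeCongr L2),
        (∀ (x y : L) (hx1 : x ∈ L1) (hx2 : x ∈ L2) (hy1 : y ∈ L1) (hy2 : y ∈ L2),
          θ1.r ⟨x, hx1⟩ ⟨y, hy1⟩ ↔ θ2.r ⟨x, hx2⟩ ⟨y, hy2⟩) →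
        ∃! θ : LatticeCongr L, θ.restrict L1 = θ1 ∧ θ.restrict L2 = θ2 := by
  refine ⟨fun θ x y hx1 hx2 hy1 hy2 => Iff.rfl, ?_⟩
  intro θ1 θ2 hagree
  obtain ⟨u, hu1, hu2⟩ := hne
  have htot : ∀ x : L, x ∈ L1 ∨ x ∈ L2 := by
    intro x
    have hx : x ∈ (L1 : Set L) ∪ (L2 : Set L) := by rw [hcover]; trivial
    exact hx
  let C : GlueCtx L1 L2 θ1 θ2 := ⟨htot, hdown, hup, u, hu1, hu2, hagree⟩
  exact ⟨C.glue, ⟨C.glue_restrict1, C.glue_restrict2⟩, fun ψ hψ => C.glue_unique ψ hψ.1 hψ.2⟩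
end
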